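/- arXiv:2509.04251 — 4 statements merged into one kernel-verified Lean document; each statement's English description precedes it below -/
import Mathlib

section
/- Energy preservation of the SSAV iteration (Theorem 3.1): if (v△, u△, ρ△) ∈ E × E × ℝ satisfies the one-step SSAV deterministic system v△ = v − α h (u + u△) − h (ρ△ + ρ) Q(u), u△ = u + (h/2)(v△ + v), ρ△ = ρ + (h/2) ⟨Q(u), v△ + v⟩, then (1/2)‖v△‖² + α‖u△‖² + (ρ△)² = (1/2)‖v‖² + α‖u‖² + ρ². -/
open RealInnerProductSpace

/-- The scalar auxiliary function `S(u) = √(κ Φ(u) + C_H − α ‖u‖²)`. -/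
noncomputable def ssavS {m : ℕ} (α κ C_H : ℝ) (Φ : EuclideanSpace ℝ (Fin m) → ℝ)
    (x : EuclideanSpace ℝ (Fin m)) : ℝ :=
  Real.sqrt (κ * Φ x + C_H - α * ‖x‖ ^ 2)

/-- The auxiliary vector `Q(u) = (κ ∇Φ(u) − 2α u) / (2 S(u))`. -/
noncomputable def ssavQ {m : ℕ} (α κ C_H : ℝ) (Φ : EuclideanSpace ℝ (Fin m) → ℝ)
    (gradΦ : EuclideanSpace ℝ (Fin m) → EuclideanSpace ℝ (Fin m))
    (x : EuclideanSpace ℝ (Fin m)) : EuclideanSpace ℝ (Fin m) :=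
  (2 * ssavS α κ C_H Φ x)⁻¹ • (κ • gradΦ x - (2 * α) • x)

/-- Energy preservation of the SSAV iteration (Theorem 3.1). -/
theorem ssav_energy_preservation {m : ℕ} (α h κ C_H : ℝ)
    (hα : 0 < α) (hh0 : 0 < h) (hh1 : h ≤ 1) (hκ : 0 < κ)
    (Φ : EuclideanSpace ℝ (Fin m) → ℝ)
    (gradΦ : EuclideanSpace ℝ (Fin m) → EuclideanSpace ℝ (Fin m))
    (hΦ : ∀ x, HasGradientAt Φ (gradΦ x) x)
    (hwell : ∀ x : EuclideanSpace ℝ (Fin m), κ * Φ x + C_H - α * ‖x‖ ^ 2 ≥ 1)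
    (v u vd ud : EuclideanSpace ℝ (Fin m)) (ρ ρd : ℝ)
    (h1 : vd = v - (α * h) • (u + ud) - (h * (ρd + ρ)) • ssavQ α κ C_H Φ gradΦ u)
    (h2 : ud = u + (h / 2) • (vd + v))
    (h3 : ρd = ρ + (h / 2) * ⟪ssavQ α κ C_H Φ gradΦ u, vd + v⟫) :
    (1 / 2) * ‖vd‖ ^ 2 + α * ‖ud‖ ^ 2 + ρd ^ 2
      = (1 / 2) * ‖v‖ ^ 2 + α * ‖u‖ ^ 2 + ρ ^ 2 := by
  set q := ssavQ α κ C_H Φ gradΦ u with hq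
  set A := ⟪u + ud, vd + v⟫ with hA
  set B := ⟪q, vd + v⟫ with hB
  have hv : ‖vd‖ ^ 2 = ‖v‖ ^ 2 - (α * h) * A - (h * (ρd + ρ)) * B := by
    have key : ‖vd‖ ^ 2 - ‖v‖ ^ 2 = ⟪vd - v, vd + v⟫ := by
      simp only [inner_sub_left, inner_add_right, real_inner_self_eq_norm_sq,
        real_inner_comm vd v]
      ring
    have h1' : vd - v = -((α * h) • (u + ud)) - (h * (ρd + ρ)) • q := by
      rw [h1]; abel
    rw [h1', inner_sub_left, inner_neg_left, real_inner_smul_left, real_inner_smul_left,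
      ← hA, ← hB] at key
    linarith
  have hu : ‖ud‖ ^ 2 = ‖u‖ ^ 2 + (h / 2) * A := by
    have key : ‖ud‖ ^ 2 - ‖u‖ ^ 2 = ⟪ud - u, ud + u⟫ := by
      simp only [inner_sub_left, inner_add_right, real_inner_self_eq_norm_sq,
        real_inner_comm ud u]
      ring
    have h2' : ud - u = (h / 2) • (vd + v) := by rw [h2]; abel
    have hc : ⟪vd + v, ud + u⟫ = A := by
      rw [hA, add_comm u ud, real_inner_comm]
    rw [h2', real_inner_smul_left, hc] at key
    linarith
  have hρ : ρd ^ 2 = ρ ^ 2 + (h / 2) * B * (ρd + ρ) := by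
    linear_combination (ρd + ρ) * h3
  linear_combination (1 / 2) * hv + α * hu + hρ
end

section
/- Explicit solvability of the SSAV step, existence part (Proposition 2.3): writing Q := Q(u), D := 2 + α h² + ‖Q‖² h², I := (ρ (2 + α h²) + h ⟨Q, v − α h u⟩) / D, the explicit triple ρ⋆ := ρ + h ⟨Q, 2v − 2αh u − 2h ρ Q⟩ / D, v⋆ := (2v − 4h I Q − 4αh u − α h² v) / (2 + α h²), u⋆ := u + h (2v − 2h I Q − 2αh u) / (2 + α h²) satisfies the one-step SSAV deterministic system, i.e. v⋆ = v − α h (u + u⋆) − h (ρ⋆ + ρ) Q, u⋆ = u + (h/2)(v⋆ + v), and ρ⋆ = ρ + (h/2) ⟨Q, v⋆ + v⟩. -/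
open RealInnerProductSpace

/-- Explicit solvability of the SSAV step, existence part (Proposition 2.3). -/
theorem ssav_explicit_solvable_existence {m : ℕ} (α h κ C_H : ℝ)
    (hα : 0 < α) (hh0 : 0 < h) (hh1 : h ≤ 1) (hκ : 0 < κ)
    (Φ : EuclideanSpace ℝ (Fin m) → ℝ)
    (gradΦ : EuclideanSpace ℝ (Fin m) → EuclideanSpace ℝ (Fin m))
    (hΦ : ∀ x, HasGradientAt Φ (gradΦ x) x)
    (hwell : ∀ x : EuclideanSpace ℝ (Fin m), κ * Φ x + C_H - α * ‖x‖ ^ 2 ≥ 1)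
    (v u : EuclideanSpace ℝ (Fin m)) (ρ : ℝ)
    (Q : EuclideanSpace ℝ (Fin m)) (hQdef : Q = ssavQ α κ C_H Φ gradΦ u)
    (D I : ℝ)
    (hD : D = 2 + α * h ^ 2 + ‖Q‖ ^ 2 * h ^ 2)
    (hI : I = (ρ * (2 + α * h ^ 2) + h * ⟪Q, v - (α * h) • u⟫) / D)
    (ρs : ℝ) (vs us : EuclideanSpace ℝ (Fin m))
    (hρs : ρs = ρ + h * ⟪Q, (2 : ℝ) • v - (2 * α * h) • u - (2 * h * ρ) • Q⟫ / D)
    (hvs : vs = (2 + α * h ^ 2)⁻¹ •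
      ((2 : ℝ) • v - (4 * h * I) • Q - (4 * α * h) • u - (α * h ^ 2) • v))
    (hus : us = u + (h / (2 + α * h ^ 2)) •
      ((2 : ℝ) • v - (2 * h * I) • Q - (2 * α * h) • u)) :
    vs = v - (α * h) • (u + us) - (h * (ρs + ρ)) • Q ∧
    us = u + (h / 2) • (vs + v) ∧
    ρs = ρ + (h / 2) * ⟪Q, vs + v⟫ := by
  have hc : (0:ℝ) < 2 + α * h ^ 2 := by positivity
  have hc' : (2 + α * h ^ 2 : ℝ) ≠ 0 := ne_of_gt hc
  have hD2 : (2 + α * h ^ 2 + ‖Q‖ ^ 2 * h ^ 2 : ℝ) ≠ 0 := by positivity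
  have hq : ⟪Q, Q⟫ = ‖Q‖ ^ 2 := real_inner_self_eq_norm_sq Q
  rw [inner_sub_right, real_inner_smul_right] at hI
  rw [inner_sub_right, inner_sub_right, real_inner_smul_right,
    real_inner_smul_right, real_inner_smul_right, hq] at hρs
  set a := ⟪Q, v⟫ with ha
  set b := ⟪Q, u⟫ with hb
  clear_value a b
  subst hD hI hρs hvs hus
  refine ⟨?_, ?_, ?_⟩
  · match_scalars <;> (field_simp; try ring) <;> tauto
  · match_scalars <;> (field_simp; try ring) <;> tauto
  · rw [inner_add_right, real_inner_smul_right, inner_sub_right,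
      inner_sub_right, inner_sub_right, real_inner_smul_right, real_inner_smul_right,
      real_inner_smul_right, real_inner_smul_right, hq, ← ha, ← hb]
    field_simp
    ring
end

section
/- Explicit solvability of the SSAV step, uniqueness part (Proposition 2.3): writing Q := Q(u), D := 2 + α h² + ‖Q‖² h², I := (ρ (2 + α h²) + h ⟨Q, v − α h u⟩) / D, if (v△, u△, ρ△) ∈ E × E × ℝ satisfies the one-step SSAV deterministic system v△ = v − α h (u + u△) − h (ρ△ + ρ) Q, u△ = u + (h/2)(v△ + v), ρ△ = ρ + (h/2) ⟨Q, v△ + v⟩, then ρ△ = ρ + h ⟨Q, 2v − 2αh u − 2h ρ Q⟩ / D, v△ = (2v − 4h I Q − 4αh u − α h² v) / (2 + α h²), and u△ = u + h (2v − 2h I Q − 2αh u) / (2 + α h²). -/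
open RealInnerProductSpace

/-- Explicit solvability of the SSAV step, uniqueness part (Proposition 2.3). -/
theorem ssav_explicit_solvable_uniqueness {m : ℕ} (α h κ C_H : ℝ)
    (hα : 0 < α) (hh0 : 0 < h) (hh1 : h ≤ 1) (hκ : 0 < κ)
    (Φ : EuclideanSpace ℝ (Fin m) → ℝ)
    (gradΦ : EuclideanSpace ℝ (Fin m) → EuclideanSpace ℝ (Fin m))
    (hΦ : ∀ x, HasGradientAt Φ (gradΦ x) x)
    (hwell : ∀ x : EuclideanSpace ℝ (Fin m), κ * Φ x + C_H - α * ‖x‖ ^ 2 ≥ 1)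
    (v u : EuclideanSpace ℝ (Fin m)) (ρ : ℝ)
    (Q : EuclideanSpace ℝ (Fin m)) (hQdef : Q = ssavQ α κ C_H Φ gradΦ u)
    (D I : ℝ)
    (hD : D = 2 + α * h ^ 2 + ‖Q‖ ^ 2 * h ^ 2)
    (hI : I = (ρ * (2 + α * h ^ 2) + h * ⟪Q, v - (α * h) • u⟫) / D)
    (vd ud : EuclideanSpace ℝ (Fin m)) (ρd : ℝ)
    (h1 : vd = v - (α * h) • (u + ud) - (h * (ρd + ρ)) • Q)
    (h2 : ud = u + (h / 2) • (vd + v))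
    (h3 : ρd = ρ + (h / 2) * ⟪Q, vd + v⟫) :
    ρd = ρ + h * ⟪Q, (2 : ℝ) • v - (2 * α * h) • u - (2 * h * ρ) • Q⟫ / D ∧
    vd = (2 + α * h ^ 2)⁻¹ •
      ((2 : ℝ) • v - (4 * h * I) • Q - (4 * α * h) • u - (α * h ^ 2) • v) ∧
    ud = u + (h / (2 + α * h ^ 2)) •
      ((2 : ℝ) • v - (2 * h * I) • Q - (2 * α * h) • u) := by
  have hDpos : (0:ℝ) < D := by
    rw [hD]
    have h1' : 0 ≤ α * h ^ 2 := by positivity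
    have h2' : 0 ≤ ‖Q‖ ^ 2 * h ^ 2 := by positivity
    linarith
  have hDne : D ≠ 0 := ne_of_gt hDpos
  have hApos : (0:ℝ) < 2 + α * h ^ 2 := by nlinarith
  have hAne : (2 + α * h ^ 2) ≠ 0 := ne_of_gt hApos
  -- scalar projections
  have e1 : ⟪Q, vd⟫ = ⟪Q, v⟫ - α * h * (⟪Q, u⟫ + ⟪Q, ud⟫) - h * (ρd + ρ) * ‖Q‖ ^ 2 := by
    rw [h1]
    simp only [inner_sub_right, inner_add_right, real_inner_smul_right,
      real_inner_self_eq_norm_sq]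
    try ring
  have e2 : ⟪Q, ud⟫ = ⟪Q, u⟫ + h / 2 * (⟪Q, vd⟫ + ⟪Q, v⟫) := by
    rw [h2]
    simp only [inner_add_right, real_inner_smul_right]
  have e3 : ρd = ρ + h / 2 * (⟪Q, vd⟫ + ⟪Q, v⟫) := by
    rw [h3, inner_add_right]
  have hx : ⟪Q, vd⟫ * (2 + α * h ^ 2 + ‖Q‖ ^ 2 * h ^ 2) =
      2 * ⟪Q, v⟫ - 4 * α * h * ⟪Q, u⟫ - α * h ^ 2 * ⟪Q, v⟫ - 4 * h * ρ * ‖Q‖ ^ 2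
        - h ^ 2 * ⟪Q, v⟫ * ‖Q‖ ^ 2 := by
    linear_combination 2 * e1 - 2 * α * h * e2 - 2 * h * ‖Q‖ ^ 2 * e3
  have hIP : ⟪Q, (2 : ℝ) • v - (2 * α * h) • u - (2 * h * ρ) • Q⟫
      = 2 * ⟪Q, v⟫ - 2 * α * h * ⟪Q, u⟫ - 2 * h * ρ * ‖Q‖ ^ 2 := by
    simp only [inner_sub_right, real_inner_smul_right, real_inner_self_eq_norm_sq]
  have key : h / 2 * (⟪Q, vd⟫ + ⟪Q, v⟫)
      = h * (2 * ⟪Q, v⟫ - 2 * α * h * ⟪Q, u⟫ - 2 * h * ρ * ‖Q‖ ^ 2) / D := by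
    rw [eq_div_iff hDne, hD]
    linear_combination (h / 2) * hx
  have hrho : ρd = ρ + h * ⟪Q, (2 : ℝ) • v - (2 * α * h) • u - (2 * h * ρ) • Q⟫ / D := by
    rw [hIP, e3, key]
  have hIPv : ⟪Q, v - (α * h) • u⟫ = ⟪Q, v⟫ - α * h * ⟪Q, u⟫ := by
    simp only [inner_sub_right, real_inner_smul_right]
  have hs : ρd + ρ = 2 * I := by
    rw [e3, hI, hIPv, ← mul_div_assoc, eq_div_iff hDne, hD]
    linear_combination (h / 2) * hx
  -- the vector equation for vd
  have h1' : vd = v - (α * h) • (u + ud) - (2 * h * I) • Q := by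
    rw [h1, show h * (ρd + ρ) = 2 * h * I by rw [hs]; ring]
  have hvd : (2 + α * h ^ 2) • vd =
      (2 : ℝ) • v - (4 * h * I) • Q - (4 * α * h) • u - (α * h ^ 2) • v := by
    linear_combination (norm := module) (2:ℝ) • h1' - (2 * α * h) • h2
  have hvd' : vd = (2 + α * h ^ 2)⁻¹ •
      ((2 : ℝ) • v - (4 * h * I) • Q - (4 * α * h) • u - (α * h ^ 2) • v) := by
    rw [← hvd, smul_smul, inv_mul_cancel₀ hAne, one_smul]
  refine ⟨hrho, hvd', ?_⟩
  have hud : (2 + α * h ^ 2) • ud = (2 + α * h ^ 2) • (u + (h / (2 + α * h ^ 2)) •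
      ((2 : ℝ) • v - (2 * h * I) • Q - (2 * α * h) • u)) := by
    have hcoef : (2 + α * h ^ 2) * (h / (2 + α * h ^ 2)) = h := by
      field_simp
    rw [smul_add, smul_smul, hcoef]
    linear_combination (norm := module) (2 + α * h ^ 2) • h2 + (h / 2) • hvd
  exact smul_right_injective _ hAne hud
end

section
/- Algebraic energy identity for the SSAV step with general auxiliary vector (the computation proving Theorem 3.1): if (v△, u△, ρ△) ∈ E × E × ℝ satisfies v△ = v − α h (u + u△) − h (ρ△ + ρ) Q, u△ = u + (h/2)(v△ + v), ρ△ = ρ + (h/2) ⟨Q, v△ + v⟩ for an arbitrary vector Q ∈ E, then (1/2)⟨v△ + v, v△ − v⟩ + α ⟨u△ + u, u△ − u⟩ = ρ² − (ρ△)², and consequently (1/2)‖v△‖² + α‖u△‖² + (ρ△)² = (1/2)‖v‖² + α‖u‖² + ρ². -/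
open RealInnerProductSpace

/-- Algebraic energy identity for the SSAV step with a general auxiliary vector
(the computation proving Theorem 3.1). -/
theorem ssav_algebraic_energy_identity {m : ℕ} (α h : ℝ)
    (hα : 0 < α) (hh0 : 0 < h) (hh1 : h ≤ 1)
    (v u Q : EuclideanSpace ℝ (Fin m)) (ρ : ℝ)
    (vd ud : EuclideanSpace ℝ (Fin m)) (ρd : ℝ)
    (h1 : vd = v - (α * h) • (u + ud) - (h * (ρd + ρ)) • Q)
    (h2 : ud = u + (h / 2) • (vd + v))
    (h3 : ρd = ρ + (h / 2) * ⟪Q, vd + v⟫) :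
    (1 / 2) * ⟪vd + v, vd - v⟫ + α * ⟪ud + u, ud - u⟫ = ρ ^ 2 - ρd ^ 2 ∧
    (1 / 2) * ‖vd‖ ^ 2 + α * ‖ud‖ ^ 2 + ρd ^ 2
      = (1 / 2) * ‖v‖ ^ 2 + α * ‖u‖ ^ 2 + ρ ^ 2 := by
  have hv : vd - v = (-(α * h)) • (u + ud) + (-(h * (ρd + ρ))) • Q := by
    rw [h1]; module
  have hu : ud - u = (h / 2) • (vd + v) := by
    rw [h2]; module
  have e1 : ⟪vd + v, vd - v⟫ =
      (-(α * h)) * ⟪vd + v, u + ud⟫ + (-(h * (ρd + ρ))) * ⟪Q, vd + v⟫ := by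
    rw [hv, inner_add_right, real_inner_smul_right, real_inner_smul_right,
      real_inner_comm (vd + v) Q]
  have e2 : ⟪ud + u, ud - u⟫ = (h / 2) * ⟪vd + v, u + ud⟫ := by
    rw [hu, real_inner_smul_right, real_inner_comm, add_comm u ud]
  have e3 : ρd - ρ = (h / 2) * ⟪Q, vd + v⟫ := by rw [h3]; ring
  have key : (1 / 2) * ⟪vd + v, vd - v⟫ + α * ⟪ud + u, ud - u⟫ = ρ ^ 2 - ρd ^ 2 := by
    rw [e1, e2]
    linear_combination (ρd + ρ) * e3
  refine ⟨key, ?_⟩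
  have n1 : ⟪vd + v, vd - v⟫ = ‖vd‖ ^ 2 - ‖v‖ ^ 2 := by
    rw [inner_sub_right, inner_add_left, inner_add_left,
      real_inner_self_eq_norm_sq, real_inner_self_eq_norm_sq,
      real_inner_comm v vd]
    ring
  have n2 : ⟪ud + u, ud - u⟫ = ‖ud‖ ^ 2 - ‖u‖ ^ 2 := by
    rw [inner_sub_right, inner_add_left, inner_add_left,
      real_inner_self_eq_norm_sq, real_inner_self_eq_norm_sq,
      real_inner_comm u ud]
    ring
  rw [n1, n2] at key
  linarith [key]
end
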